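/- Let p be a prime, A an integral domain of characteristic p which is a unique factorization domain, and K its fraction field. Let ξ_1, …, ξ_r be pairwise non-associated prime elements of A, let n_1, …, n_r be integers, and set x = ∏_t ξ_t^{n_t} and x' = ∏_t ξ_t^{⌊n_t/p⌋} in K (integer powers taken in K). Let m ≥ 2. Then: (i) every a ∈ 𝕎 K satisfying fil(x, m) also satisfies fil(x', m−1), i.e. for all j < m−1, x'·(a.coeff j)^(p^(m−2−j)) lies in the image of A; (ii) conversely, for every b ∈ 𝕎 K satisfying fil(x', m−1) there exists a ∈ 𝕎 K satisfying fil(x, m) with a.coeff j = b.coeff j for all j < m−1; and (iii) if a ∈ 𝕎 K satisfies fil(x, m) and a.coeff j = 0 for all j < m−1, then x·(a.coeff (m−1)) lies in the image of A. (This expresses the short exact sequence 0 → fil_D O_U → fil_D W_m O_U → fil_{D/p} W_{m−1} O_U → 0 relating the restriction map R and V^{m−1}.) -/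

import Mathlib

/-- The Brylinski–Kato filtration condition on (truncated) Witt vectors, in Witt
coordinates: `a ∈ 𝕎 K` satisfies `fil(x, m)` if for every `j < m` the element
`x * (a.coeff j) ^ (p ^ (m - 1 - j))` lies in the image of `A` in `K`. -/
def WittFil (p : ℕ) [Fact p.Prime] (A : Type*) {K : Type*} [CommRing A] [CommRing K]
    [Algebra A K] (x : K) (m : ℕ) (a : WittVector p K) : Prop :=
  ∀ j < m, x * a.coeff j ^ p ^ (m - 1 - j) ∈ Set.range (algebraMap A K)

/-- If `z ^ p * e ∈ A` where no `p`-th prime power divides `e`, then `z ∈ A`. -/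
theorem key_descend {A : Type*} [CommRing A] [IsDomain A] [UniqueFactorizationMonoid A]
    {K : Type*} [Field K] [Algebra A K] [IsFractionRing A K]
    {p : ℕ} (hp : p ≠ 0) {e : A} (he : ∀ π : A, Prime π → ¬ π ^ p ∣ e)
    {z : K} (h : z ^ p * algebraMap A K e ∈ Set.range (algebraMap A K)) :
    z ∈ Set.range (algebraMap A K) := by
  obtain ⟨w, hw⟩ := h
  obtain ⟨a, ha⟩ : ∃ a : A, a = IsFractionRing.num A z := ⟨_, rfl⟩
  obtain ⟨b, hbd⟩ : ∃ b : A, b = (IsFractionRing.den A z : A) := ⟨_, rfl⟩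
  have hb0 : b ≠ 0 := hbd ▸ nonZeroDivisors.coe_ne_zero _
  have hbK : algebraMap A K b ≠ 0 :=
    (map_ne_zero_iff _ (IsFractionRing.injective A K)).mpr hb0
  have hza : algebraMap A K a = z * algebraMap A K b := by
    have h := IsFractionRing.mk'_num_den' A z
    rw [div_eq_iff (hbd ▸ hbK)] at h
    rw [ha, hbd]
    exact h.symm ▸ rfl
  -- the key equation in A
  have hkey : a ^ p * e = w * b ^ p := by
    apply IsFractionRing.injective A K
    rw [map_mul, map_mul, map_pow, map_pow, hza, mul_pow, hw]
    ring
  -- b is a unit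
  have hbu : IsUnit b := by
    by_contra hbu
    obtain ⟨π, hπirr, hπb⟩ := WfDvdMonoid.exists_irreducible_factor hbu hb0
    have hπ : Prime π := (UniqueFactorizationMonoid.irreducible_iff_prime).mp hπirr
    have hπa : ¬ π ∣ a := fun hd =>
      hπ.not_unit (IsFractionRing.num_den_reduced A z (ha ▸ hd) (hbd ▸ hπb))
    have hππ : π ^ p ∣ a ^ p * e := by
      rw [hkey]
      exact Dvd.dvd.mul_left (pow_dvd_pow_of_dvd hπb p) w
    have : π ^ p ∣ e :=
      hπ.pow_dvd_of_dvd_mul_left p (fun hd => hπa (hπ.dvd_of_dvd_pow hd)) hππ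
    exact he π hπ this
  obtain ⟨c, hc⟩ := IsFractionRing.isInteger_of_isUnit_den (K := K) (hbd ▸ hbu)
  exact ⟨c, hc⟩

theorem wittFil_restriction_exact_sequence
    (p : ℕ) [Fact p.Prime]
    (A : Type*) [CommRing A] [IsDomain A] [CharP A p] [UniqueFactorizationMonoid A]
    (K : Type*) [Field K] [Algebra A K] [IsFractionRing A K]
    (r : ℕ) (ξ : Fin r → A)
    (hprime : ∀ t, Prime (ξ t))
    (hassoc : ∀ t t', t ≠ t' → ¬ Associated (ξ t) (ξ t'))
    (n : Fin r → ℤ)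
    (x x' : K)
    (hx : x = ∏ t, (algebraMap A K (ξ t)) ^ (n t))
    (hx' : x' = ∏ t, (algebraMap A K (ξ t)) ^ (Int.fdiv (n t) p))
    (m : ℕ) (hm : 2 ≤ m) :
    (∀ a : WittVector p K, WittFil p A x m a → WittFil p A x' (m - 1) a) ∧
    (∀ b : WittVector p K, WittFil p A x' (m - 1) b →
      ∃ a : WittVector p K, WittFil p A x m a ∧ ∀ j < m - 1, a.coeff j = b.coeff j) ∧
    (∀ a : WittVector p K, WittFil p A x m a → (∀ j < m - 1, a.coeff j = 0) →
      x * a.coeff (m - 1) ∈ Set.range (algebraMap A K)) := by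
  have hpp : p.Prime := Fact.out
  have hp0 : (0:ℤ) < (p:ℤ) := by exact_mod_cast hpp.pos
  -- the remainders
  set s : Fin r → ℕ := fun t => ((n t).fmod p).toNat with hs
  have hsval : ∀ t, ((s t : ℤ)) = (n t).fmod p := fun t =>
    Int.toNat_of_nonneg (Int.fmod_nonneg_of_pos (n t) hp0)
  have hslt : ∀ t, s t < p := by
    intro t
    have h1 : (n t).fmod p < p := Int.fmod_lt_of_pos (n t) hp0
    have h2 := hsval t
    omega
  set e : A := ∏ t, ξ t ^ s t with hedef
  -- ξ t does not divide the other factors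
  have hnd : ∀ t : Fin r, ¬ ξ t ∣ ∏ u ∈ Finset.univ.erase t, ξ u ^ s u := by
    intro t hd
    obtain ⟨u, hu, hdu⟩ := (hprime t).exists_mem_finset_dvd hd
    have hut : u ≠ t := (Finset.mem_erase.mp hu).1
    exact hassoc t u (fun h => hut h.symm)
      ((hprime t).associated_of_dvd (hprime u) ((hprime t).dvd_of_dvd_pow hdu))
  -- no p-th prime power divides e
  have he : ∀ π : A, Prime π → ¬ π ^ p ∣ e := by
    intro π hπ hd
    have hπe : π ∣ e := dvd_trans (dvd_pow_self π hpp.ne_zero) hd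
    obtain ⟨t, -, hdt⟩ := hπ.exists_mem_finset_dvd hπe
    have hπξ : Associated π (ξ t) := hπ.associated_of_dvd (hprime t) (hπ.dvd_of_dvd_pow hdt)
    have hd2 : ξ t ^ p ∣ e := ((Associated.pow_pow hπξ).dvd_iff_dvd_left).mp hd
    rw [hedef, ← Finset.mul_prod_erase _ _ (Finset.mem_univ t)] at hd2
    have hd3 : ξ t ^ p ∣ ξ t ^ s t :=
      (hprime t).pow_dvd_of_dvd_mul_right p (hnd t) hd2
    -- contradiction with s t < p
    have hstp := hslt t
    obtain ⟨c, hc⟩ := hd3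
    have : ξ t ^ s t * 1 = ξ t ^ s t * (ξ t ^ (p - s t) * c) := by
      rw [mul_one, ← mul_assoc, ← pow_add]
      have : s t + (p - s t) = p := by omega
      rw [this, ← hc]
    have h1 : (1 : A) = ξ t ^ (p - s t) * c :=
      mul_left_cancel₀ (pow_ne_zero _ (hprime t).ne_zero) this
    have hps2 : p - s t - 1 + 1 = p - s t := by omega
    have : IsUnit (ξ t) := isUnit_of_dvd_one ⟨ξ t ^ (p - s t - 1) * c, by
      rw [h1, ← mul_assoc, ← pow_succ', hps2]⟩
    exact (hprime t).not_isUnit this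
  -- key identity x = x'^p * e
  have hune : ∀ t, algebraMap A K (ξ t) ≠ 0 := fun t =>
    (map_ne_zero_iff _ (IsFractionRing.injective A K)).mpr (hprime t).ne_zero
  have hxe : x = x' ^ p * algebraMap A K e := by
    rw [hx, hx', hedef, map_prod, ← Finset.prod_pow, ← Finset.prod_mul_distrib]
    refine Finset.prod_congr rfl fun t _ => ?_
    have hn : n t = (n t).fdiv p * p + (s t : ℤ) := by
      rw [hsval t]
      have := Int.fdiv_mul_add_fmod (n t) p
      linarith [this]
    conv_lhs => rw [hn]
    rw [zpow_add₀ (hune t), zpow_mul, zpow_natCast, zpow_natCast, map_pow]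
  -- the two directions at the level of single elements
  have L2 : ∀ y : K, x' * y ∈ Set.range (algebraMap A K) →
      x * y ^ p ∈ Set.range (algebraMap A K) := by
    intro y ⟨w, hw⟩
    refine ⟨w ^ p * e, ?_⟩
    rw [map_mul, map_pow, hw, hxe]
    ring
  have L1 : ∀ y : K, x * y ^ p ∈ Set.range (algebraMap A K) →
      x' * y ∈ Set.range (algebraMap A K) := by
    intro y hy
    apply key_descend hpp.ne_zero he
    have : (x' * y) ^ p * algebraMap A K e = x * y ^ p := by rw [hxe]; ring
    rwa [this]
  refine ⟨?_, ?_, ?_⟩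
  · -- (i)
    intro a ha j hj
    have hjm : j < m := by omega
    have h1 := ha j hjm
    have hexp : m - 1 - j = (m - 1 - 1 - j) + 1 := by omega
    rw [hexp, pow_succ, pow_mul] at h1
    exact L1 _ h1
  · -- (ii)
    intro b hb
    refine ⟨WittVector.mk p (fun j => if j < m - 1 then b.coeff j else 0), ?_, ?_⟩
    · intro j hj
      rcases lt_or_ge j (m - 1) with hjm | hjm
      · have h1 := hb j hjm
        have hexp : m - 1 - j = (m - 1 - 1 - j) + 1 := by omega
        rw [hexp, pow_succ, pow_mul]
        simp only [WittVector.coeff_mk, if_pos hjm]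
        exact L2 _ h1
      · have hje : j = m - 1 := by omega
        simp only [WittVector.coeff_mk, if_neg (not_lt.mpr hjm)]
        rw [zero_pow (pow_ne_zero _ hpp.ne_zero), mul_zero]
        exact ⟨0, by simp⟩
    · intro j hj
      simp only [WittVector.coeff_mk, if_pos hj]
  · -- (iii)
    intro a ha _
    have h1 := ha (m - 1) (by omega)
    simpa using h1
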